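/- arXiv:2111.12630 — 2 statements merged into one kernel-verified Lean document; each statement's English description precedes it below -/
import Mathlib

section
/- Let n ≥ 3, let a, b, c be integers with a ≥ 1, b ≥ 1, c ≥ 1 and a + b + c = n, and let m ≥ 0. Applying to the vector ((m+1)^a, m^b, (m+1)^c), in order, the simple reflections s_1, s_2, …, s_{a+b}; then s_{a+b−1}, s_{a+b−2}, …, s_1; then s_{a+b+1}, s_{a+b+2}, …, s_n; then s_{n−1}, s_{n−2}, …, s_{a+b+1}, yields the vector ((m+2)^a, (m+1)^b, (m+2)^c). -/
/-- The component number (in `{1, …, n}`) of a cyclic index `j : ZMod n`. -/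
def compNo {n : ℕ} (j : ZMod n) : ℕ := if j.val = 0 then n else j.val

/-- The `i`-th simple root (standard basis vector) of type `Ã_{n-1}`. -/
def stdRoot (n : ℕ) (i : ZMod n) : ZMod n → ℤ := fun j => if j = i then 1 else 0

/-- The `i`-th simple reflection: `(s_i v)_j = v_j` for `j ≠ i`, and
`(s_i v)_i = v_{i-1} + v_{i+1} - v_i` (indices mod `n`). -/
def simpleRefl (n : ℕ) (i : ZMod n) (v : ZMod n → ℤ) : ZMod n → ℤ :=
  fun j => if j = i then v (i - 1) + v (i + 1) - v i else v j

/-- Apply a list of simple reflections in order (head of the list applied first). -/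
def applySeq (n : ℕ) (L : List (ZMod n)) (v : ZMod n → ℤ) : ZMod n → ℤ :=
  L.foldl (fun w i => simpleRefl n i w) v

/-- Interpret a list of natural-number indices as cyclic indices mod `n`. -/
def natSeq (n : ℕ) (L : List ℕ) : List (ZMod n) := L.map (fun k => (k : ZMod n))

/-- A real root: a vector obtained from a simple root by a finite sequence of
simple reflections. -/
def IsRealRoot (n : ℕ) (v : ZMod n → ℤ) : Prop :=
  ∃ (L : List (ZMod n)) (k : ZMod n), v = applySeq n L (stdRoot n k)

/-- The vector whose first `a` components are `x`, next `b` components are `y`,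
and remaining components are `z`. -/
def blockVec (n : ℕ) (x y z : ℤ) (a b : ℕ) : ZMod n → ℤ :=
  fun j => if compNo j ≤ a then x else if compNo j ≤ a + b then y else z

/-- The all-ones vector `𝟙`. -/
def onesVec (n : ℕ) : ZMod n → ℤ := fun _ => 1

/-- The block of reflections `s_{d+1}, …, s_{n-1}; s_n, s_{n-1}, …, s_1; s_2, …, s_d`
(in order of application). -/
def blockW (n d : ℕ) : List ℕ :=
  List.range' (d+1) (n - 1 - d) ++ (List.range' 1 n).reverse ++ List.range' 2 (d - 1)

/-- The block of reflections `s_1, …, s_{a+b}; s_{a+b-1}, …, s_1; s_{a+b+1}, …, s_n;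
s_{n-1}, …, s_{a+b+1}` (in order of application), with `d = a + b`. -/
def blockW2 (n d : ℕ) : List ℕ :=
  List.range' 1 d ++ (List.range' 1 (d-1)).reverse ++ List.range' (d+1) (n - d) ++
    (List.range' (d+1) (n - 1 - d)).reverse

/-! ### Auxiliary machinery: natural-number indexed reflections -/

/-- Cyclic predecessor in `{1, …, n}`. -/
def cpred (n k : ℕ) : ℕ := if k = 1 then n else k - 1

/-- Cyclic successor in `{1, …, n}`. -/
def csucc (n k : ℕ) : ℕ := if k = n then 1 else k + 1

/-- The simple reflection acting on vectors indexed by `ℕ` (components `1..n`). -/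
def natRefl (n k : ℕ) (g : ℕ → ℤ) : ℕ → ℤ :=
  Function.update g k (g (cpred n k) + g (csucc n k) - g k)

/-- Apply a list of nat-indexed reflections. -/
def applyNat (n : ℕ) (L : List ℕ) (g : ℕ → ℤ) : ℕ → ℤ :=
  L.foldl (fun h k => natRefl n k h) g

lemma applyNat_singleton (n x : ℕ) (g : ℕ → ℤ) :
    applyNat n [x] g = natRefl n x g := rfl

lemma applyNat_cons (n x : ℕ) (L : List ℕ) (g : ℕ → ℤ) :
    applyNat n (x :: L) g = applyNat n L (natRefl n x g) := rfl

lemma applyNat_append (n : ℕ) (L₁ L₂ : List ℕ) (g : ℕ → ℤ) :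
    applyNat n (L₁ ++ L₂) g = applyNat n L₂ (applyNat n L₁ g) :=
  List.foldl_append

lemma compNo_mem {n : ℕ} [NeZero n] (j : ZMod n) : 1 ≤ compNo j ∧ compNo j ≤ n := by
  have h := ZMod.val_lt j
  have h2 := NeZero.pos n
  unfold compNo
  by_cases h0 : j.val = 0
  · rw [if_pos h0]; omega
  · rw [if_neg h0]; omega

lemma compNo_cast {n k : ℕ} [NeZero n] (h1 : 1 ≤ k) (h2 : k ≤ n) :
    compNo ((k : ZMod n)) = k := by
  unfold compNo
  rcases eq_or_lt_of_le h2 with h | h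
  · subst h
    simp [ZMod.natCast_self]
  · rw [ZMod.val_natCast_of_lt h, if_neg (by omega : ¬ k = 0)]

lemma cast_compNo {n : ℕ} [NeZero n] (j : ZMod n) : ((compNo j : ℕ) : ZMod n) = j := by
  unfold compNo
  split_ifs with h
  · rw [ZMod.natCast_self]
    exact ((ZMod.val_eq_zero j).mp h).symm
  · exact ZMod.natCast_rightInverse j

lemma compNo_cast_sub_one {n k : ℕ} [NeZero n] (h1 : 1 ≤ k) (h2 : k ≤ n) :
    compNo ((k : ZMod n) - 1) = cpred n k := by
  unfold cpred
  split_ifs with h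
  · have e : (k : ZMod n) - 1 = ((n : ℕ) : ZMod n) := by
      rw [h, ZMod.natCast_self, Nat.cast_one, sub_self]
    rw [e, compNo_cast (by omega) le_rfl]
  · have : (k : ZMod n) - 1 = ((k - 1 : ℕ) : ZMod n) := by
      have : (k : ℕ) = (k - 1) + 1 := by omega
      rw [this]; push_cast; ring
    rw [this, compNo_cast (by omega) (by omega)]

lemma compNo_cast_add_one {n k : ℕ} [NeZero n] (h1 : 1 ≤ k) (h2 : k ≤ n) :
    compNo ((k : ZMod n) + 1) = csucc n k := by
  unfold csucc
  split_ifs with h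
  · have e : (k : ZMod n) + 1 = ((1 : ℕ) : ZMod n) := by
      rw [h, ZMod.natCast_self, Nat.cast_one, zero_add]
    rw [e, compNo_cast le_rfl (by omega)]
  · have : (k : ZMod n) + 1 = ((k + 1 : ℕ) : ZMod n) := by push_cast; ring
    rw [this, compNo_cast (by omega) (by omega)]

lemma refl_bridge {n k : ℕ} [NeZero n] (h1 : 1 ≤ k) (h2 : k ≤ n) (g : ℕ → ℤ) :
    simpleRefl n (k : ZMod n) (g ∘ compNo) = (natRefl n k g) ∘ compNo := by
  funext j
  simp only [simpleRefl, natRefl, Function.comp_apply, Function.update_apply]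
  by_cases hj : j = (k : ZMod n)
  · subst hj
    rw [if_pos rfl, if_pos (compNo_cast h1 h2), compNo_cast_sub_one h1 h2,
      compNo_cast_add_one h1 h2, compNo_cast h1 h2]
  · rw [if_neg hj, if_neg ?_]
    intro hc
    exact hj (by rw [← hc, cast_compNo])

lemma applySeq_bridge {n : ℕ} [NeZero n] (L : List ℕ)
    (hL : ∀ k ∈ L, 1 ≤ k ∧ k ≤ n) (g : ℕ → ℤ) :
    applySeq n (natSeq n L) (g ∘ compNo) = (applyNat n L g) ∘ compNo := by
  induction L generalizing g with
  | nil => rfl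
  | cons x L ih =>
    have hx := hL x List.mem_cons_self
    have : applySeq n (natSeq n (x :: L)) (g ∘ compNo)
        = applySeq n (natSeq n L) (simpleRefl n (x : ZMod n) (g ∘ compNo)) := rfl
    rw [this, refl_bridge hx.1 hx.2, applyNat_cons,
      ih (fun k hk => hL k (List.mem_cons_of_mem _ hk))]

/-! ### The intermediate vectors (as functions `ℕ → ℤ` on components `1..n`) -/

def v0 (a b m : ℕ) : ℕ → ℤ :=
  fun j => if j ≤ a then (m : ℤ) + 1 else if j ≤ a + b then (m : ℤ) else (m : ℤ) + 1

def vA (a b m : ℕ) : ℕ → ℤ :=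
  fun j => if j ≤ a + b then v0 a b m (j + 1) else v0 a b m j

def vS (a b m t : ℕ) : ℕ → ℤ :=
  fun j => if t + 1 ≤ j ∧ j ≤ a + b - 1 then v0 a b m j + 1 else vA a b m j

def vU (a m : ℕ) : ℕ → ℤ :=
  fun j => if 1 ≤ j ∧ j ≤ a then (m : ℤ) + 2 else (m : ℤ) + 1

def vT (n a m : ℕ) : ℕ → ℤ :=
  fun j => if j = n then (m : ℤ) + 2 else vU a m j

def vR (n a m k : ℕ) : ℕ → ℤ :=
  fun j => if k ≤ j ∧ j ≤ n - 1 then (m : ℤ) + 2 else vT n a m j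


section Vals

variable {a b n m j : ℕ}

lemma v0_lo (h : j ≤ a) : v0 a b m j = (m : ℤ) + 1 := by
  simp only [v0]; rw [if_pos h]

lemma v0_mid (h1 : a < j) (h2 : j ≤ a + b) : v0 a b m j = (m : ℤ) := by
  simp only [v0]; rw [if_neg (by omega), if_pos h2]

lemma v0_hi (h : a + b < j) : v0 a b m j = (m : ℤ) + 1 := by
  simp only [v0]; rw [if_neg (by omega), if_neg (by omega)]

lemma vA_le (h : j ≤ a + b) : vA a b m j = v0 a b m (j + 1) := by
  simp only [vA]; rw [if_pos h]

lemma vA_gt (h : a + b < j) : vA a b m j = v0 a b m j := by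
  simp only [vA]; rw [if_neg (by omega)]

lemma vS_in {t : ℕ} (h1 : t + 1 ≤ j) (h2 : j ≤ a + b - 1) :
    vS a b m t j = v0 a b m j + 1 := by
  simp only [vS]; rw [if_pos ⟨h1, h2⟩]

lemma vS_out {t : ℕ} (h : ¬(t + 1 ≤ j ∧ j ≤ a + b - 1)) :
    vS a b m t j = vA a b m j := by
  simp only [vS]; rw [if_neg h]

lemma vU_in (h1 : 1 ≤ j) (h2 : j ≤ a) : vU a m j = (m : ℤ) + 2 := by
  simp only [vU]; rw [if_pos ⟨h1, h2⟩]

lemma vU_out (h : ¬(1 ≤ j ∧ j ≤ a)) : vU a m j = (m : ℤ) + 1 := by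
  simp only [vU]; rw [if_neg h]

lemma vT_self : vT n a m n = (m : ℤ) + 2 := by
  simp [vT]

lemma vT_ne (h : j ≠ n) : vT n a m j = vU a m j := by
  simp only [vT]; rw [if_neg h]

lemma vR_in {k : ℕ} (h1 : k ≤ j) (h2 : j ≤ n - 1) : vR n a m k j = (m : ℤ) + 2 := by
  simp only [vR]; rw [if_pos ⟨h1, h2⟩]

lemma vR_out {k : ℕ} (h : ¬(k ≤ j ∧ j ≤ n - 1)) : vR n a m k j = vT n a m j := by
  simp only [vR]; rw [if_neg h]

end Vals

section Phases

variable {n a b c m : ℕ} (ha : 1 ≤ a) (hb : 1 ≤ b) (hc : 1 ≤ c) (habc : a + b + c = n)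

include ha hb hc habc

lemma phase1 : ∀ k, k ≤ a + b → applyNat n (List.range' 1 k) (v0 a b m) =
    fun j => if j ≤ k then v0 a b m (j + 1) else v0 a b m j := by
  intro k hk
  induction k with
  | zero =>
    funext j
    show v0 a b m j = if j ≤ 0 then v0 a b m (j + 1) else v0 a b m j
    by_cases h : j ≤ 0
    · rw [if_pos h, show j = 0 from by omega, v0_lo (Nat.zero_le a), v0_lo ha]
    · rw [if_neg h]
  | succ k ih =>
    have hlist : List.range' 1 (k + 1) = List.range' 1 k ++ [1 + k] := by
      simpa using List.range'_concat (step := 1) (s := 1) (n := k)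
    rw [hlist, applyNat_append, ih (by omega), show 1 + k = k + 1 from by omega,
      applyNat_singleton]
    funext j
    simp only [natRefl, Function.update_apply, cpred, csucc]
    simp only [if_neg (show ¬ k + 1 = n from by omega)]
    by_cases hj : j = k + 1
    · subst hj
      rw [if_pos rfl, if_pos (le_refl (k + 1))]
      by_cases hk1 : k + 1 = 1
      · simp only [if_pos hk1]
        rw [if_neg (show ¬ n ≤ k from by omega),
          if_neg (show ¬ k + 1 + 1 ≤ k from by omega),
          if_neg (show ¬ k + 1 ≤ k from by omega),
          v0_hi (show a + b < n from by omega),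
          show v0 a b m (k + 1) = (m : ℤ) + 1 from v0_lo (by omega)]
        ring
      · simp only [if_neg hk1]
        simp only [Nat.add_sub_cancel]
        rw [if_pos (le_refl k), if_neg (show ¬ k + 1 + 1 ≤ k from by omega),
          if_neg (show ¬ k + 1 ≤ k from by omega)]
        ring
    · rw [if_neg hj]
      by_cases hjk : j ≤ k
      · rw [if_pos hjk, if_pos (show j ≤ k + 1 from by omega)]
      · rw [if_neg hjk, if_neg (show ¬ j ≤ k + 1 from by omega)]

lemma phase2 : ∀ t, t ≤ a + b - 1 →
    applyNat n (List.range' 1 t).reverse (vS a b m t) = vS a b m 0 := by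
  intro t ht
  induction t with
  | zero => rfl
  | succ t ih =>
    have hlist : (List.range' 1 (t + 1)).reverse = (1 + t) :: (List.range' 1 t).reverse := by
      have := List.range'_concat (step := 1) (s := 1) (n := t)
      simp only [one_mul] at this
      rw [this, List.reverse_append, List.reverse_singleton, List.singleton_append]
    rw [hlist, applyNat_cons, show 1 + t = t + 1 from by omega]
    have hstep : natRefl n (t + 1) (vS a b m (t + 1)) = vS a b m t := by
      funext j
      simp only [natRefl, Function.update_apply, cpred, csucc]
      rw [if_neg (show ¬ t + 1 = n from by omega)]
      by_cases hj : j = t + 1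
      · subst hj
        rw [if_pos rfl, vS_in (le_refl (t + 1)) ht,
          show vS a b m (t + 1) (t + 1) = v0 a b m (t + 1 + 1) from by
            rw [vS_out (by omega), vA_le (by omega)]]
        have hup : vS a b m (t + 1) (t + 1 + 1) = v0 a b m (t + 1 + 1) + 1 := by
          by_cases hd : t + 1 + 1 ≤ a + b - 1
          · rw [vS_in (by omega) hd]
          · rw [vS_out (by omega), vA_le (by omega),
              v0_hi (show a + b < t + 1 + 1 + 1 from by omega),
              v0_mid (show a < t + 1 + 1 from by omega) (show t + 1 + 1 ≤ a + b from by omega)]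
        rw [hup]
        by_cases ht1 : t + 1 = 1
        · rw [if_pos ht1,
            show vS a b m (t + 1) n = (m : ℤ) + 1 from by
              rw [vS_out (by omega), vA_gt (by omega), v0_hi (by omega)],
            v0_lo (show t + 1 ≤ a from by omega)]
          ring
        · rw [if_neg ht1]
          simp only [Nat.add_sub_cancel]
          rw [show vS a b m (t + 1) t = v0 a b m (t + 1) from by
            rw [vS_out (by omega), vA_le (by omega)]]
          ring
      · rw [if_neg hj]
        by_cases hin : t + 1 + 1 ≤ j ∧ j ≤ a + b - 1
        · rw [vS_in hin.1 hin.2, vS_in (show t + 1 ≤ j from by omega) hin.2]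
        · rw [vS_out hin, vS_out (show ¬(t + 1 ≤ j ∧ j ≤ a + b - 1) from by omega)]
    rw [hstep]
    exact ih (by omega)

lemma vS_top : vS a b m (a + b - 1) = vA a b m := by
  funext j
  by_cases h : a + b - 1 + 1 ≤ j ∧ j ≤ a + b - 1
  · exact absurd h (by omega)
  · exact vS_out h

lemma vS_zero : vS a b m 0 = vU a m := by
  funext j
  by_cases h1 : 1 ≤ j ∧ j ≤ a + b - 1
  · rw [vS_in h1.1 h1.2]
    by_cases h2 : j ≤ a
    · rw [v0_lo h2, vU_in h1.1 h2]; ring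
    · rw [v0_mid (by omega) (by omega), vU_out (by omega)]
  · rw [vS_out h1, vU_out (show ¬(1 ≤ j ∧ j ≤ a) from by omega)]
    by_cases hz : j = 0
    · rw [hz, vA_le (by omega), v0_lo ha]
    · by_cases hle : j ≤ a + b
      · rw [vA_le hle, v0_hi (by omega)]
      · rw [vA_gt (by omega), v0_hi (by omega)]

lemma phase3a : ∀ t s, a + 2 ≤ s → s + t ≤ n →
    applyNat n (List.range' s t) (vU a m) = vU a m := by
  intro t
  induction t with
  | zero => intro s _ _; rfl
  | succ t ih =>
    intro s hs hst
    rw [List.range'_succ, applyNat_cons]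
    have hstep : natRefl n s (vU a m) = vU a m := by
      funext j
      simp only [natRefl, Function.update_apply, cpred, csucc]
      rw [if_neg (show ¬ s = 1 from by omega), if_neg (show ¬ s = n from by omega)]
      by_cases hj : j = s
      · rw [if_pos hj, hj, vU_out (show ¬(1 ≤ s - 1 ∧ s - 1 ≤ a) from by omega),
          vU_out (show ¬(1 ≤ s + 1 ∧ s + 1 ≤ a) from by omega),
          vU_out (show ¬(1 ≤ s ∧ s ≤ a) from by omega)]
        ring
      · rw [if_neg hj]
    rw [hstep]
    exact ih (s + 1) (by omega) (by omega)

lemma phase3b : natRefl n n (vU a m) = vT n a m := by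
  funext j
  simp only [natRefl, Function.update_apply, cpred, csucc]
  rw [if_neg (show ¬ n = 1 from by omega)]
  simp only [eq_self_iff_true, if_true]
  by_cases hj : j = n
  · rw [if_pos hj, hj, vT_self,
      vU_out (show ¬(1 ≤ n - 1 ∧ n - 1 ≤ a) from by omega),
      vU_in (le_refl 1) ha, vU_out (show ¬(1 ≤ n ∧ n ≤ a) from by omega)]
    ring
  · rw [if_neg hj, vT_ne hj]

lemma vR_top : vR n a m n = vT n a m := by
  funext j
  exact vR_out (by omega)

lemma phase4 : ∀ t, a + b + 1 + t ≤ n →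
    applyNat n (List.range' (a + b + 1) t).reverse (vR n a m (a + b + 1 + t)) =
      vR n a m (a + b + 1) := by
  intro t
  induction t with
  | zero => intro _; rfl
  | succ t ih =>
    intro ht
    have hlist : (List.range' (a + b + 1) (t + 1)).reverse
        = (a + b + 1 + t) :: (List.range' (a + b + 1) t).reverse := by
      have := List.range'_concat (step := 1) (s := a + b + 1) (n := t)
      simp only [one_mul] at this
      rw [this, List.reverse_append, List.reverse_singleton, List.singleton_append]
    rw [hlist, applyNat_cons]
    have hstep : natRefl n (a + b + 1 + t) (vR n a m (a + b + 1 + (t + 1)))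
        = vR n a m (a + b + 1 + t) := by
      funext j
      simp only [natRefl, Function.update_apply, cpred, csucc]
      rw [if_neg (show ¬ a + b + 1 + t = 1 from by omega),
        if_neg (show ¬ a + b + 1 + t = n from by omega)]
      by_cases hj : j = a + b + 1 + t
      · subst hj
        rw [if_pos rfl, show a + b + 1 + t - 1 = a + b + t from by omega,
          show vR n a m (a + b + 1 + (t + 1)) (a + b + t) = (m : ℤ) + 1 from by
            rw [vR_out (by omega), vT_ne (by omega), vU_out (by omega)],
          show vR n a m (a + b + 1 + (t + 1)) (a + b + 1 + t) = (m : ℤ) + 1 from by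
            rw [vR_out (by omega), vT_ne (by omega), vU_out (by omega)],
          vR_in (le_refl (a + b + 1 + t)) (show a + b + 1 + t ≤ n - 1 from by omega)]
        have hup : vR n a m (a + b + 1 + (t + 1)) (a + b + 1 + t + 1) = (m : ℤ) + 2 := by
          by_cases hK : a + b + 1 + t + 1 ≤ n - 1
          · exact vR_in (by omega) hK
          · rw [vR_out (by omega), show a + b + 1 + t + 1 = n from by omega, vT_self]
        rw [hup]
        ring
      · rw [if_neg hj]
        by_cases hin : a + b + 1 + (t + 1) ≤ j ∧ j ≤ n - 1
        · rw [vR_in hin.1 hin.2, vR_in (show a + b + 1 + t ≤ j from by omega) hin.2]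
        · rw [vR_out hin, vR_out (show ¬(a + b + 1 + t ≤ j ∧ j ≤ n - 1) from by omega)]
    rw [hstep]
    exact ih (by omega)

end Phases

theorem statement11 (n : ℕ) (hn : 3 ≤ n) (a b c m : ℕ)
    (ha : 1 ≤ a) (hb : 1 ≤ b) (hc : 1 ≤ c) (habc : a + b + c = n) :
    applySeq n (natSeq n (blockW2 n (a + b)))
        (blockVec n ((m : ℤ) + 1) (m : ℤ) ((m : ℤ) + 1) a b) =
      blockVec n ((m : ℤ) + 2) ((m : ℤ) + 1) ((m : ℤ) + 2) a b := by
  haveI : NeZero n := ⟨by omega⟩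
  have hin : blockVec n ((m : ℤ) + 1) (m : ℤ) ((m : ℤ) + 1) a b = (v0 a b m) ∘ compNo := by
    funext j
    simp only [blockVec, v0, Function.comp_apply]
  rw [hin]
  have hmem : ∀ k ∈ blockW2 n (a + b), 1 ≤ k ∧ k ≤ n := by
    intro k hk
    simp only [blockW2, List.mem_append, List.mem_reverse, List.mem_range'_1] at hk
    omega
  rw [applySeq_bridge _ hmem]
  have hsplit : applyNat n (blockW2 n (a + b)) (v0 a b m) = vR n a m (a + b + 1) := by
    unfold blockW2
    rw [applyNat_append, applyNat_append, applyNat_append]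
    rw [phase1 ha hb hc habc (a + b) le_rfl]
    have hA : (fun j => if j ≤ a + b then v0 a b m (j + 1) else v0 a b m j) = vA a b m := rfl
    rw [hA, ← vS_top ha hb hc habc, phase2 ha hb hc habc _ le_rfl,
      vS_zero ha hb hc habc]
    have hL3 : List.range' (a + b + 1) (n - (a + b))
        = List.range' (a + b + 1) (n - 1 - (a + b)) ++ [n] := by
      have h1 : n - (a + b) = (n - 1 - (a + b)) + 1 := by omega
      have h2 : a + b + 1 + 1 * (n - 1 - (a + b)) = n := by omega
      rw [h1, List.range'_concat, h2]
    rw [hL3, applyNat_append, phase3a ha hb hc habc _ _ (by omega) (by omega)]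
    have hb' : applyNat n [n] (vU a m) = vT n a m := phase3b ha hb hc habc
    rw [hb']
    have h4 : a + b + 1 + (n - 1 - (a + b)) = n := by omega
    have := phase4 (m := m) ha hb hc habc (n - 1 - (a + b)) (by omega)
    rw [h4, vR_top ha hb hc habc] at this
    exact this
  rw [hsplit]
  funext j
  have hj := compNo_mem j
  simp only [blockVec, Function.comp_apply]
  by_cases h1 : compNo j ≤ a
  · rw [if_pos h1, vR_out (by omega), vT_ne (by omega), vU_in (by omega) h1]
  · rw [if_neg h1]
    by_cases h2 : compNo j ≤ a + b
    · rw [if_pos h2, vR_out (by omega), vT_ne (by omega), vU_out (by omega)]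
    · rw [if_neg h2]
      by_cases h3 : compNo j ≤ n - 1
      · rw [vR_in (by omega) h3]
      · rw [vR_out (by omega), show compNo j = n from by omega, vT_self]
end

section
/- Let n ≥ 3 and let m, a, b, c be integers with m ≥ 0, a ≥ 1, b ≥ 1, c ≥ 1 and a + b + c = n. Starting from the simple root α_1, apply, in order, the simple reflections s_2, s_3, …, s_a, then s_{a+b+1}, s_{a+b+2}, …, s_n, then s_{n−1}, s_{n−2}, …, s_{a+b+1}; and then apply m times in succession the block consisting of, in order: s_1, s_2, …, s_{a+b}; then s_{a+b−1}, s_{a+b−2}, …, s_1; then s_{a+b+1}, s_{a+b+2}, …, s_n; then s_{n−1}, s_{n−2}, …, s_{a+b+1}. The resulting vector is ((m+1)^a, m^b, (m+1)^c). In particular, ((m+1)^a, m^b, (m+1)^c) is a positive real root. -/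
lemma zcast_ne {n p q : ℕ} (h1 : p < q) (h2 : q < p + n) : (p : ZMod n) ≠ (q : ZMod n) := by
  intro h
  rw [ZMod.natCast_eq_natCast_iff] at h
  have hd := (Nat.modEq_iff_dvd' h1.le).mp h
  have := Nat.le_of_dvd (by omega) hd
  omega

lemma zcast_ne2 {n p q : ℕ} (hp : 1 ≤ p) (hpn : p ≤ n) (hq : 1 ≤ q) (hqn : q ≤ n)
    (hne : p ≠ q) : (p : ZMod n) ≠ (q : ZMod n) := by
  rcases Nat.lt_or_ge p q with h | h
  · exact zcast_ne h (by omega)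
  · exact (zcast_ne (by omega) (by omega)).symm

/-- key facts about compNo -/
lemma compNo_bounds {n : ℕ} (hn : 0 < n) (j : ZMod n) :
    1 ≤ compNo j ∧ compNo j ≤ n ∧ ((compNo j : ℕ) : ZMod n) = j := by
  haveI : NeZero n := ⟨hn.ne'⟩
  unfold compNo
  by_cases h : j.val = 0
  · rw [if_pos h]
    refine ⟨hn, le_rfl, ?_⟩
    rw [ZMod.natCast_self]
    exact ((ZMod.val_eq_zero j).mp h).symm
  · rw [if_neg h]
    exact ⟨by omega, (ZMod.val_lt j).le, ZMod.natCast_rightInverse j⟩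

lemma compNo_cast_s12 {n : ℕ} {p : ℕ} (hp : 1 ≤ p) (hpn : p ≤ n) :
    compNo ((p : ℕ) : ZMod n) = p := by
  haveI : NeZero n := ⟨by omega⟩
  unfold compNo
  rw [ZMod.val_natCast]
  rcases Nat.lt_or_ge p n with h | h
  · rw [Nat.mod_eq_of_lt h, if_neg (by omega)]
  · have hpn' : p = n := le_antisymm hpn h
    subst hpn'
    simp
lemma applySeq_nil (n : ℕ) (v : ZMod n → ℤ) : applySeq n (natSeq n []) v = v := rfl

lemma applySeq_append (n : ℕ) (L1 L2 : List ℕ) (v : ZMod n → ℤ) :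
    applySeq n (natSeq n (L1 ++ L2)) v = applySeq n (natSeq n L2) (applySeq n (natSeq n L1) v) := by
  simp [natSeq, applySeq, List.foldl_append]

lemma applySeq_append' (n : ℕ) (L1 L2 : List (ZMod n)) (v : ZMod n → ℤ) :
    applySeq n (L1 ++ L2) v = applySeq n L2 (applySeq n L1 v) := by
  simp [applySeq, List.foldl_append]

lemma range'_snoc (s l : ℕ) : List.range' s (l+1) = List.range' s l ++ [s + l] := by
  rw [List.range'_concat]
  simp

lemma fwd_main (n : ℕ) (k : ℕ) :
    ∀ (l : ℕ), l + 1 ≤ n → ∀ v : ZMod n → ℤ,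
      ((∀ j : ZMod n, (∀ t, 1 ≤ t → t ≤ l → j ≠ ((k + t : ℕ) : ZMod n)) →
          applySeq n (natSeq n (List.range' (k+1) l)) v j = v j) ∧
       (∀ t, 1 ≤ t → t ≤ l →
          applySeq n (natSeq n (List.range' (k+1) l)) v (((k + t : ℕ) : ZMod n))
            = v ((k : ℕ) : ZMod n) - v (((k+1 : ℕ) : ZMod n)) + v (((k + t + 1 : ℕ) : ZMod n))))
  | 0, hl, v => ⟨fun j _ => rfl, fun t ht1 ht0 => by omega⟩
  | (l+1), hl, v => by
    have IH := fwd_main n k l (by omega) v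
    set w := applySeq n (natSeq n (List.range' (k+1) l)) v with hw
    have hsplit : applySeq n (natSeq n (List.range' (k+1) (l+1))) v
        = simpleRefl n (((k+l+1 : ℕ)) : ZMod n) w := by
      rw [range'_snoc, applySeq_append]
      have e : k + 1 + l = k + l + 1 := by omega
      rw [e]
      rfl
    constructor
    · intro j hj
      rw [hsplit]
      unfold simpleRefl
      have hji : j ≠ ((k + l + 1 : ℕ) : ZMod n) := by
        have := hj (l+1) (by omega) le_rfl
        have e : k + (l+1) = k + l + 1 := by omega
        rwa [e] at this
      rw [if_neg hji]
      exact IH.1 j (fun t ht1 htl => hj t ht1 (by omega))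
    · intro t ht1 htl
      by_cases htl' : t ≤ l
      · have hne : ((k + t : ℕ) : ZMod n) ≠ ((k + l + 1 : ℕ) : ZMod n) :=
          zcast_ne (by omega) (by omega)
        rw [hsplit]
        unfold simpleRefl
        rw [if_neg hne]
        exact IH.2 t ht1 htl'
      · have ht : t = l + 1 := by omega
        subst ht
        have e : k + (l+1) = k + l + 1 := by omega
        rw [e, hsplit]
        unfold simpleRefl
        rw [if_pos rfl]
        have hi1 : ((k + l + 1 : ℕ) : ZMod n) - 1 = ((k + l : ℕ) : ZMod n) := by
          push_cast; ring
        have hi2 : ((k + l + 1 : ℕ) : ZMod n) + 1 = ((k + l + 2 : ℕ) : ZMod n) := by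
          push_cast; ring
        rw [hi1, hi2]
        have hw2 : w ((k + l + 2 : ℕ) : ZMod n) = v ((k + l + 2 : ℕ) : ZMod n) :=
          IH.1 _ (fun t' h1 h2 => (zcast_ne (p := k + t') (by omega) (by omega)).symm)
        have hw3 : w ((k + l + 1 : ℕ) : ZMod n) = v ((k + l + 1 : ℕ) : ZMod n) :=
          IH.1 _ (fun t' h1 h2 => (zcast_ne (p := k + t') (by omega) (by omega)).symm)
        rw [hw2, hw3]
        have e2 : k + l + 1 + 1 = k + l + 2 := by omega
        rw [e2]
        rcases Nat.eq_zero_or_pos l with hl0 | hl0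
        · subst hl0
          have hw1 : w ((k + 0 : ℕ) : ZMod n) = v ((k + 0 : ℕ) : ZMod n) :=
            IH.1 _ (fun t' h1 h2 => by omega)
          have e3 : k + 0 = k := by omega
          rw [e3] at hw1
          rw [show k + 0 = k from rfl, hw1]
          ring
        · have hw1 := IH.2 l hl0 le_rfl
          rw [hw1]
          have e4 : k + l + 1 = k + l + 1 := rfl
          ring
lemma bwd_main (n : ℕ) (k : ℕ) :
    ∀ (l : ℕ), l + 1 ≤ n → ∀ v : ZMod n → ℤ,
      ((∀ j : ZMod n, (∀ t, 1 ≤ t → t ≤ l → j ≠ ((k + t : ℕ) : ZMod n)) →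
          applySeq n (natSeq n ((List.range' (k+1) l).reverse)) v j = v j) ∧
       (∀ t, 1 ≤ t → t ≤ l →
          applySeq n (natSeq n ((List.range' (k+1) l).reverse)) v (((k + t : ℕ) : ZMod n))
            = v ((k + t - 1 : ℕ) : ZMod n) + v (((k + l + 1 : ℕ) : ZMod n))
              - v (((k + l : ℕ) : ZMod n))))
  | 0, hl, v => ⟨fun j _ => rfl, fun t ht1 ht0 => by omega⟩
  | (l+1), hl, v => by
    set u := simpleRefl n (((k + l + 1 : ℕ)) : ZMod n) v with hu
    have IH := bwd_main n k l (by omega) u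
    have hsplit : applySeq n (natSeq n ((List.range' (k+1) (l+1)).reverse)) v
        = applySeq n (natSeq n ((List.range' (k+1) l).reverse)) u := by
      rw [range'_snoc, List.reverse_append]
      have e : k + 1 + l = k + l + 1 := by omega
      simp only [List.reverse_singleton, List.singleton_append, e]
      rfl
    have hu_at : u ((k + l + 1 : ℕ) : ZMod n)
        = v ((k + l : ℕ) : ZMod n) + v ((k + l + 2 : ℕ) : ZMod n) - v ((k + l + 1 : ℕ) : ZMod n) := by
      rw [hu]
      unfold simpleRefl
      rw [if_pos rfl]
      have hi1 : ((k + l + 1 : ℕ) : ZMod n) - 1 = ((k + l : ℕ) : ZMod n) := by push_cast; ring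
      have hi2 : ((k + l + 1 : ℕ) : ZMod n) + 1 = ((k + l + 2 : ℕ) : ZMod n) := by push_cast; ring
      rw [hi1, hi2]
    have hu_ne : ∀ j : ZMod n, j ≠ ((k + l + 1 : ℕ) : ZMod n) → u j = v j := by
      intro j hj
      rw [hu]
      unfold simpleRefl
      rw [if_neg hj]
    constructor
    · intro j hj
      rw [hsplit, IH.1 j (fun t ht1 htl => hj t ht1 (by omega))]
      refine hu_ne j ?_
      have := hj (l+1) (by omega) le_rfl
      have e : k + (l + 1) = k + l + 1 := by omega
      rwa [e] at this
    · intro t ht1 htl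
      have e : k + (l + 1) = k + l + 1 := by omega
      have e2 : k + l + 1 + 1 = k + l + 2 := by omega
      rw [e, e2]
      by_cases htl' : t ≤ l
      · rw [hsplit, IH.2 t ht1 htl']
        have h1 : u ((k + t - 1 : ℕ) : ZMod n) = v ((k + t - 1 : ℕ) : ZMod n) :=
          hu_ne _ (zcast_ne (by omega) (by omega))
        have h2 : u ((k + l : ℕ) : ZMod n) = v ((k + l : ℕ) : ZMod n) :=
          hu_ne _ (zcast_ne (by omega) (by omega))
        rw [h1, h2, hu_at]
        ring
      · have ht : t = l + 1 := by omega
        subst ht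
        rw [hsplit]
        have h3 : applySeq n (natSeq n ((List.range' (k+1) l).reverse)) u ((k + (l+1) : ℕ) : ZMod n)
            = u ((k + (l+1) : ℕ) : ZMod n) :=
          IH.1 _ (fun t' h1 h2 => (zcast_ne (p := k + t') (by omega) (by omega)).symm)
        rw [h3]
        have e3 : k + (l + 1) = k + l + 1 := by omega
        rw [e3, hu_at]
        have e4 : k + l + 1 - 1 = k + l := by omega
        rw [e4]
def OnPts (n : ℕ) (v : ZMod n → ℤ) (f : ℕ → ℤ) : Prop :=
  ∀ p, 1 ≤ p → p ≤ n → v ((p : ℕ) : ZMod n) = f p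

lemma onPts_ext {n : ℕ} (hn : 0 < n) {v w : ZMod n → ℤ} {f : ℕ → ℤ}
    (h1 : OnPts n v f) (h2 : OnPts n w f) : v = w := by
  funext j
  obtain ⟨hb1, hb2, hb3⟩ := compNo_bounds hn j
  rw [← hb3, h1 _ hb1 hb2, h2 _ hb1 hb2]

lemma onPts_congr {n : ℕ} {v : ZMod n → ℤ} {f g : ℕ → ℤ}
    (h : OnPts n v f) (hfg : ∀ p, 1 ≤ p → p ≤ n → f p = g p) : OnPts n v g :=
  fun p hp1 hpn => (h p hp1 hpn).trans (hfg p hp1 hpn)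

lemma fwd_onPts {n : ℕ} (k l : ℕ) (hkl : k + l ≤ n) (hl : l + 1 ≤ n)
    {v : ZMod n → ℤ} {f : ℕ → ℤ} (hv : OnPts n v f) :
    OnPts n (applySeq n (natSeq n (List.range' (k+1) l)) v)
      (fun p => if k+1 ≤ p ∧ p ≤ k+l then
          f (if k = 0 then n else k) - f (k+1) + (if p < n then f (p+1) else f 1)
        else f p) := by
  intro p hp1 hpn
  simp only
  by_cases hw : k+1 ≤ p ∧ p ≤ k+l
  · rw [if_pos hw]
    obtain ⟨hw1, hw2⟩ := hw
    have h2 := (fwd_main n k l hl v).2 (p - k) (by omega) (by omega)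
    have e : k + (p - k) = p := by omega
    rw [e] at h2
    rw [h2]
    congr 1
    · congr 1
      · by_cases hk0 : k = 0
        · subst hk0
          rw [if_pos rfl]
          have e2 : ((0 : ℕ) : ZMod n) = ((n : ℕ) : ZMod n) := by simp
          rw [show ((0:ℕ) : ZMod n) = ((n : ℕ) : ZMod n) from e2]
          exact hv n (by omega) le_rfl
        · rw [if_neg hk0]
          exact hv k (by omega) (by omega)
      · exact hv (k+1) (by omega) (by omega)
    · by_cases hpn' : p < n
      · rw [if_pos hpn']
        exact hv (p+1) (by omega) (by omega)
      · rw [if_neg hpn']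
        have e3 : ((p + 1 : ℕ) : ZMod n) = ((1 : ℕ) : ZMod n) := by
          rw [show p = n by omega]
          push_cast
          simp
        rw [e3]
        exact hv 1 (by omega) (by omega)
  · rw [if_neg hw]
    refine ((fwd_main n k l hl v).1 _ (fun t ht1 htl => ?_)).trans (hv p hp1 hpn)
    exact zcast_ne2 hp1 hpn (by omega) (by omega) (by omega)

lemma bwd_onPts {n : ℕ} (k l : ℕ) (hkl : k + l + 1 ≤ n)
    {v : ZMod n → ℤ} {f : ℕ → ℤ} (hv : OnPts n v f) :
    OnPts n (applySeq n (natSeq n ((List.range' (k+1) l).reverse)) v)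
      (fun p => if k+1 ≤ p ∧ p ≤ k+l then
          (if p = k+1 then f (if k = 0 then n else k) else f (p-1)) + f (k+l+1) - f (k+l)
        else f p) := by
  intro p hp1 hpn
  simp only
  by_cases hw : k+1 ≤ p ∧ p ≤ k+l
  · rw [if_pos hw]
    obtain ⟨hw1, hw2⟩ := hw
    have h2 := (bwd_main n k l (by omega) v).2 (p - k) (by omega) (by omega)
    have e : k + (p - k) = p := by omega
    rw [e] at h2
    rw [h2]
    congr 1
    · congr 1
      · by_cases hp1' : p = k+1
        · rw [if_pos hp1']
          by_cases hk0 : k = 0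
          · rw [if_pos hk0]
            have e2 : ((p - 1 : ℕ) : ZMod n) = ((n : ℕ) : ZMod n) := by
              rw [show p - 1 = 0 by omega]
              simp
            rw [e2]
            exact hv n (by omega) le_rfl
          · rw [if_neg hk0, show p - 1 = k by omega]
            exact hv k (by omega) (by omega)
        · rw [if_neg hp1']
          exact hv (p-1) (by omega) (by omega)
      · exact hv (k+l+1) (by omega) (by omega)
    · exact hv (k+l) (by omega) (by omega)
  · rw [if_neg hw]
    refine ((bwd_main n k l (by omega) v).1 _ (fun t ht1 htl => ?_)).trans (hv p hp1 hpn)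
    exact zcast_ne2 hp1 hpn (by omega) (by omega) (by omega)
lemma stdRoot_onPts {n : ℕ} (hn : 3 ≤ n) :
    OnPts n (stdRoot n 1) (fun p => if p = 1 then (1:ℤ) else 0) := by
  intro p hp1 hpn
  unfold stdRoot
  by_cases h : p = 1
  · subst h
    simp
  · have hne : ((p:ℕ) : ZMod n) ≠ (1 : ZMod n) := by
      have := zcast_ne2 hp1 hpn (le_refl 1) (by omega) h
      rwa [Nat.cast_one] at this
    rw [if_neg hne]
    simp [h]

lemma blockVec_onPts {n : ℕ} (x y z : ℤ) (a b : ℕ) :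
    OnPts n (blockVec n x y z a b)
      (fun p => if p ≤ a then x else if p ≤ a + b then y else z) := by
  intro p hp1 hpn
  unfold blockVec
  rw [compNo_cast_s12 hp1 hpn]

lemma base_calc {n a b c : ℕ} (hn : 3 ≤ n) (ha : 1 ≤ a) (hb : 1 ≤ b) (hc : 1 ≤ c)
    (habc : a + b + c = n) :
    applySeq n (natSeq n (List.range' 2 (a - 1) ++ List.range' (a + b + 1) c ++
        (List.range' (a + b + 1) (n - 1 - (a + b))).reverse))
      (stdRoot n (1 : ZMod n)) = blockVec n 1 0 1 a b := by
  rw [applySeq_append, applySeq_append]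
  have h0 := stdRoot_onPts hn
  have h1 := fwd_onPts 1 (a-1) (by omega) (by omega) h0
  have h1' := onPts_congr h1 (g := fun p => if p ≤ a then (1:ℤ) else 0)
    (fun p hp1 hpn => by beta_reduce; split_ifs <;> first | omega | exact (by assumption : False).elim)
  have h2 := fwd_onPts (a+b) c (by omega) (by omega) h1'
  have h2' := onPts_congr h2 (g := fun p => if p ≤ a then (1:ℤ) else if p = n then 1 else 0)
    (fun p hp1 hpn => by beta_reduce; split_ifs <;> first | omega | exact (by assumption : False).elim)
  have h3 := bwd_onPts (a+b) (n-1-(a+b)) (by omega) h2'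
  have h3' := onPts_congr h3 (g := fun p => if p ≤ a then (1:ℤ) else if p ≤ a + b then 0 else 1)
    (fun p hp1 hpn => by beta_reduce; split_ifs <;> first | omega | exact (by assumption : False).elim)
  exact onPts_ext (by omega) h3' (blockVec_onPts 1 0 1 a b)
set_option maxHeartbeats 2000000 in
lemma step_calc {n a b c : ℕ} (hn : 3 ≤ n) (ha : 1 ≤ a) (hb : 1 ≤ b) (hc : 1 ≤ c)
    (habc : a + b + c = n) (M : ℕ) :
    applySeq n (natSeq n (blockW2 n (a + b)))
      (blockVec n ((M : ℤ) + 1) (M : ℤ) ((M : ℤ) + 1) a b)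
    = blockVec n ((M : ℤ) + 2) ((M : ℤ) + 1) ((M : ℤ) + 2) a b := by
  unfold blockW2
  rw [applySeq_append, applySeq_append, applySeq_append]
  have h0 := blockVec_onPts (n := n) ((M : ℤ) + 1) (M : ℤ) ((M : ℤ) + 1) a b
  have h1 := fwd_onPts 0 (a+b) (by omega) (by omega) h0
  have h1' := onPts_congr h1
    (g := fun p => if p < a then (M:ℤ)+1 else if p < a + b then (M:ℤ) else (M:ℤ)+1)
    (fun p hp1 hpn => by beta_reduce; split_ifs <;> first | omega | exact (by assumption : False).elim)
  have h2 := bwd_onPts 0 (a+b-1) (by omega) h1'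
  have h2' := onPts_congr h2
    (g := fun p => if p ≤ a then (M:ℤ)+2 else (M:ℤ)+1)
    (fun p hp1 hpn => by beta_reduce; split_ifs <;> first | omega | exact (by assumption : False).elim)
  have h3 := fwd_onPts (a+b) (n-(a+b)) (by omega) (by omega) h2'
  have h3' := onPts_congr h3
    (g := fun p => if p ≤ a then (M:ℤ)+2 else if p = n then (M:ℤ)+2 else (M:ℤ)+1)
    (fun p hp1 hpn => by beta_reduce; split_ifs <;> first | omega | exact (by assumption : False).elim)
  have h4 := bwd_onPts (a+b) (n-1-(a+b)) (by omega) h3'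
  have h4' := onPts_congr h4
    (g := fun p => if p ≤ a then (M:ℤ)+2 else if p ≤ a + b then (M:ℤ)+1 else (M:ℤ)+2)
    (fun p hp1 hpn => by beta_reduce; split_ifs <;> first | omega | exact (by assumption : False).elim)
  exact onPts_ext (by omega) h4' (blockVec_onPts ((M:ℤ)+2) ((M:ℤ)+1) ((M:ℤ)+2) a b)
theorem statement12 (n : ℕ) (hn : 3 ≤ n) (m a b c : ℕ)
    (ha : 1 ≤ a) (hb : 1 ≤ b) (hc : 1 ≤ c) (habc : a + b + c = n) :
    ((fun v => applySeq n (natSeq n (blockW2 n (a + b))) v)^[m]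
        (applySeq n (natSeq n (List.range' 2 (a - 1) ++ List.range' (a + b + 1) c ++
            (List.range' (a + b + 1) (n - 1 - (a + b))).reverse))
          (stdRoot n (1 : ZMod n)))
      = blockVec n ((m : ℤ) + 1) (m : ℤ) ((m : ℤ) + 1) a b) ∧
    IsRealRoot n (blockVec n ((m : ℤ) + 1) (m : ℤ) ((m : ℤ) + 1) a b) ∧
    (∀ j, 0 ≤ blockVec n ((m : ℤ) + 1) (m : ℤ) ((m : ℤ) + 1) a b j) := by
  have hfirst : ∀ M : ℕ,
      (fun v => applySeq n (natSeq n (blockW2 n (a + b))) v)^[M]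
        (applySeq n (natSeq n (List.range' 2 (a - 1) ++ List.range' (a + b + 1) c ++
            (List.range' (a + b + 1) (n - 1 - (a + b))).reverse))
          (stdRoot n (1 : ZMod n)))
      = blockVec n ((M : ℤ) + 1) (M : ℤ) ((M : ℤ) + 1) a b := by
    intro M
    induction M with
    | zero =>
      rw [Function.iterate_zero_apply, base_calc hn ha hb hc habc]
      norm_num
    | succ M ih =>
      rw [Function.iterate_succ_apply', ih]
      have := step_calc hn ha hb hc habc M
      rw [this]
      have e : ((M + 1 : ℕ) : ℤ) = (M : ℤ) + 1 := by push_cast; ring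
      rw [e]
      have e2 : (M : ℤ) + 1 + 1 = (M : ℤ) + 2 := by ring
      rw [e2]
  refine ⟨hfirst m, ?_, ?_⟩
  · rw [← hfirst m]
    induction m with
    | zero =>
      exact ⟨_, 1, rfl⟩
    | succ M ih =>
      obtain ⟨L, k, hL⟩ := ih
      refine ⟨L ++ natSeq n (blockW2 n (a + b)), k, ?_⟩
      rw [Function.iterate_succ_apply']
      show applySeq n (natSeq n (blockW2 n (a + b))) _ = _
      rw [hL, applySeq_append']
  · intro j
    unfold blockVec
    split_ifs <;> omega
end
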